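/- Let F : ℝ → ℝ be monotone increasing on [a, b], let a = x₁ < x₂ < ⋯ < x_N = b, and let y₁ ≤ ⋯ ≤ y_N satisfy y_i ≤ F(x_i) for every i. Define Fapp(x) = y_i for x ∈ [x_i, x_{i+1}). Then ∫_a^b (F(x) − Fapp(x)) dx ≤ Σ_{i=1}^{N−1} (x_{i+1} − x_i)(y_{i+1} − y_i) + (b − a) · max_{1 ≤ i ≤ N} (F(x_i) − y_i); that is, the L¹ error is bounded by the total area of the dataset plus the length of the interval times the largest node error. -/

import Mathlib

open Finset

/-- The `L¹` error of the reconstruction is bounded by the total area of the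
dataset plus the interval length times the largest node error. -/
theorem L1_error_le_total_area_add_node_error (F : ℝ → ℝ) (a b : ℝ)
    (hF : MonotoneOn F (Set.Icc a b))
    (N : ℕ) (hN : 2 ≤ N) (x y : ℕ → ℝ)
    (hxa : x 0 = a) (hxb : x (N - 1) = b)
    (hx : ∀ i, i < N - 1 → x i < x (i + 1))
    (hy_mono : ∀ i, i < N - 1 → y i ≤ y (i + 1))
    (hy : ∀ i, i < N → y i ≤ F (x i))
    (Fapp : ℝ → ℝ)
    (hFapp : ∀ i, i < N - 1 → ∀ t ∈ Set.Ico (x i) (x (i + 1)), Fapp t = y i) :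
    ∫ t in a..b, (F t - Fapp t) ≤
      (∑ i ∈ Finset.range (N - 1), (x (i + 1) - x i) * (y (i + 1) - y i)) +
        (b - a) * (Finset.range N).sup' (Finset.nonempty_range_iff.mpr (by omega))
          (fun i => F (x i) - y i) := by
  set M := (Finset.range N).sup' (Finset.nonempty_range_iff.mpr (by omega))
      (fun i => F (x i) - y i) with hMdef
  have hM : ∀ i, i < N → F (x i) - y i ≤ M := fun i hi =>
    Finset.le_sup' (fun i => F (x i) - y i) (Finset.mem_range.mpr hi)
  -- monotonicity of x
  have hxle : ∀ i j, i ≤ j → j ≤ N - 1 → x i ≤ x j := by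
    intro i j hij
    induction j, hij using Nat.le_induction with
    | base => intro _; exact le_rfl
    | succ k hk ih => intro hk1; exact (ih (by omega)).trans (hx k (by omega)).le
  have hmem : ∀ i, i ≤ N - 1 → x i ∈ Set.Icc a b := by
    intro i hi
    exact ⟨hxa ▸ hxle 0 i (Nat.zero_le _) hi, hxb ▸ hxle i (N - 1) hi le_rfl⟩
  -- integrability of F on each piece
  have hFint : ∀ i, i < N - 1 → IntervalIntegrable F MeasureTheory.volume (x i) (x (i + 1)) := by
    intro i hi
    refine (hF.mono ?_).intervalIntegrable
    rw [Set.uIcc_of_le (hx i hi).le]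
    exact Set.Icc_subset_Icc (hmem i (by omega)).1 (hmem (i + 1) (by omega)).2
  -- a.e. equality of Fapp with the constant y i
  have hae : ∀ i, i < N - 1 →
      ∀ᵐ t ∂MeasureTheory.volume, t ∈ Set.uIoc (x i) (x (i + 1)) → Fapp t = y i := by
    intro i hi
    have hne : ∀ᵐ t : ℝ ∂MeasureTheory.volume, t ≠ x (i + 1) := by
      refine MeasureTheory.ae_iff.mpr ?_
      have : {t : ℝ | ¬t ≠ x (i + 1)} = {x (i + 1)} := by ext t; simp
      rw [this]; exact MeasureTheory.measure_singleton _
    filter_upwards [hne] with t ht htmem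
    rw [Set.uIoc_of_le (hx i hi).le] at htmem
    exact hFapp i hi t ⟨htmem.1.le, lt_of_le_of_ne htmem.2 ht⟩
  have hFappint : ∀ i, i < N - 1 →
      IntervalIntegrable Fapp MeasureTheory.volume (x i) (x (i + 1)) := by
    intro i hi
    refine (intervalIntegrable_const (c := y i)).congr_ae ?_
    exact (MeasureTheory.ae_restrict_iff' measurableSet_uIoc).mpr
      ((hae i hi).mono fun t ht h => (ht h).symm)
  have hsubint : ∀ i, i < N - 1 →
      IntervalIntegrable (fun t => F t - Fapp t) MeasureTheory.volume (x i) (x (i + 1)) :=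
    fun i hi => (hFint i hi).sub (hFappint i hi)
  -- per-piece bound
  have key : ∀ i, i < N - 1 → ∫ t in (x i)..(x (i + 1)), (F t - Fapp t) ≤
      (x (i + 1) - x i) * (y (i + 1) - y i) + (x (i + 1) - x i) * M := by
    intro i hi
    have h1 : ∫ t in (x i)..(x (i + 1)), (F t - Fapp t) =
        ∫ t in (x i)..(x (i + 1)), (F t - y i) := by
      refine intervalIntegral.integral_congr_ae ?_
      filter_upwards [hae i hi] with t ht htmem
      rw [ht htmem]
    have h2 : ∫ t in (x i)..(x (i + 1)), (F t - y i) ≤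
        ∫ _ in (x i)..(x (i + 1)), (F (x (i + 1)) - y i) := by
      refine intervalIntegral.integral_mono_on (hx i hi).le
        ((hFint i hi).sub intervalIntegrable_const) intervalIntegrable_const ?_
      intro t ht
      have h3 : F t ≤ F (x (i + 1)) := by
        refine hF ?_ (hmem (i + 1) (by omega)) ht.2
        exact ⟨(hmem i (by omega)).1.trans ht.1, ht.2.trans (hmem (i + 1) (by omega)).2⟩
      linarith
    have h4 : ∫ _ in (x i)..(x (i + 1)), (F (x (i + 1)) - y i) =
        (x (i + 1) - x i) * (F (x (i + 1)) - y i) := by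
      simp [intervalIntegral.integral_const, smul_eq_mul]; ring
    have h5 : F (x (i + 1)) - y i ≤ (y (i + 1) - y i) + M := by
      have := hM (i + 1) (by omega); linarith
    have h6 : (x (i + 1) - x i) * (F (x (i + 1)) - y i) ≤
        (x (i + 1) - x i) * ((y (i + 1) - y i) + M) :=
      mul_le_mul_of_nonneg_left h5 (by linarith [hx i hi])
    calc ∫ t in (x i)..(x (i + 1)), (F t - Fapp t)
        = ∫ t in (x i)..(x (i + 1)), (F t - y i) := h1
      _ ≤ (x (i + 1) - x i) * (F (x (i + 1)) - y i) := h4 ▸ h2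
      _ ≤ (x (i + 1) - x i) * ((y (i + 1) - y i) + M) := h6
      _ = (x (i + 1) - x i) * (y (i + 1) - y i) + (x (i + 1) - x i) * M := by ring
  -- split the integral
  have hsplit : ∫ t in a..b, (F t - Fapp t) =
      ∑ i ∈ Finset.range (N - 1), ∫ t in (x i)..(x (i + 1)), (F t - Fapp t) := by
    rw [intervalIntegral.sum_integral_adjacent_intervals hsubint, hxa, hxb]
  rw [hsplit]
  calc ∑ i ∈ Finset.range (N - 1), ∫ t in (x i)..(x (i + 1)), (F t - Fapp t)
      ≤ ∑ i ∈ Finset.range (N - 1),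
          ((x (i + 1) - x i) * (y (i + 1) - y i) + (x (i + 1) - x i) * M) :=
        Finset.sum_le_sum fun i hi => key i (Finset.mem_range.mp hi)
    _ = (∑ i ∈ Finset.range (N - 1), (x (i + 1) - x i) * (y (i + 1) - y i)) +
          (∑ i ∈ Finset.range (N - 1), (x (i + 1) - x i)) * M := by
        rw [Finset.sum_add_distrib, Finset.sum_mul]
    _ = (∑ i ∈ Finset.range (N - 1), (x (i + 1) - x i) * (y (i + 1) - y i)) + (b - a) * M := by
        rw [Finset.sum_range_sub x, hxa, hxb]
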